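/- Let U = [[cos(π/p), -sin(π/p)],[sin(π/p), cos(π/p)]] and V_λ = [[cos(π/q), -λ sin(π/q)],[λ⁻¹ sin(π/q), cos(π/q)]]. Then tr[U,V_λ] - 2 = (λ - 1/λ)² sin²(π/p) sin²(π/q). -/

import Mathlib

open Matrix Real

theorem stmt_5 (p q : ℝ) (hp : 2 ≤ p) (hq : 2 ≤ q) (l : ℂ) (hl : l ≠ 0) :
    letI U : Matrix (Fin 2) (Fin 2) ℂ :=
      !![(Real.cos (Real.pi / p) : ℂ), -(Real.sin (Real.pi / p) : ℂ);
         (Real.sin (Real.pi / p) : ℂ), (Real.cos (Real.pi / p) : ℂ)]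
    letI V : Matrix (Fin 2) (Fin 2) ℂ :=
      !![(Real.cos (Real.pi / q) : ℂ), -l * (Real.sin (Real.pi / q) : ℂ);
         l⁻¹ * (Real.sin (Real.pi / q) : ℂ), (Real.cos (Real.pi / q) : ℂ)]
    Matrix.trace (U * V * U⁻¹ * V⁻¹) - 2 =
      (l - 1 / l) ^ 2 * (Real.sin (Real.pi / p) : ℂ) ^ 2 * (Real.sin (Real.pi / q) : ℂ) ^ 2 := by
  set a : ℂ := (Real.cos (Real.pi / p) : ℂ)
  set b : ℂ := (Real.sin (Real.pi / p) : ℂ)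
  set c : ℂ := (Real.cos (Real.pi / q) : ℂ)
  set d : ℂ := (Real.sin (Real.pi / q) : ℂ)
  have hab : a ^ 2 + b ^ 2 = 1 := by
    simp only [a, b]
    norm_cast
    rw [← Real.sin_sq_add_cos_sq (Real.pi / p)]; ring
  have hcd : c ^ 2 + d ^ 2 = 1 := by
    simp only [c, d]
    norm_cast
    rw [← Real.sin_sq_add_cos_sq (Real.pi / q)]; ring
  have hli : l * l⁻¹ = 1 := mul_inv_cancel₀ hl
  set U : Matrix (Fin 2) (Fin 2) ℂ := !![a, -b; b, a] with hUdef
  set V : Matrix (Fin 2) (Fin 2) ℂ := !![c, -l * d; l⁻¹ * d, c] with hVdef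
  have hU : U⁻¹ = !![a, b; -b, a] := by
    apply Matrix.inv_eq_right_inv
    ext i j
    fin_cases i <;> fin_cases j <;>
      simp [U, Matrix.mul_apply, Fin.sum_univ_succ] <;>
      first
        | linear_combination hab
        | linear_combination (0 : ℂ) * hab
  have hV : V⁻¹ = !![c, l * d; -(l⁻¹ * d), c] := by
    apply Matrix.inv_eq_right_inv
    ext i j
    fin_cases i <;> fin_cases j <;>
      simp [V, Matrix.mul_apply, Fin.sum_univ_succ] <;>
      first
        | linear_combination hcd + d ^ 2 * hli
        | linear_combination (0 : ℂ) * hcd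
  rw [hU, hV]
  simp only [U, V, Matrix.trace_fin_two, Matrix.mul_apply, Fin.sum_univ_succ,
    Fin.sum_univ_zero, Matrix.cons_val', Matrix.cons_val_zero, Matrix.cons_val_one,
    Matrix.head_cons, Matrix.head_fin_const, Matrix.empty_val', Matrix.cons_val_fin_one,
    Matrix.of_apply, Fin.succ_zero_eq_one]
  field_simp
  ring_nf
  linear_combination (2 * l ^ 2 * (c ^ 2 + d ^ 2)) * hab + 2 * l ^ 2 * hcd
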